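/- Let C be a regular cone in a finite-dimensional real inner product space X and let L₁, L₂ be linear subspaces of X such that L₁ ∩ int C ≠ ∅. Then: (i) for every u ∈ X the affine subspace u + L₁ meets the interior of C, i.e. (u + L₁) ∩ int C ≠ ∅; and (ii) if L₁ ∩ C = L₂ ∩ C, then L₁ = L₂. -/
import Mathlib


open scoped RealInnerProductSpace

noncomputable section

variable {X Y : Type*} [NormedAddCommGroup X] [InnerProductSpace ℝ X]
  [NormedAddCommGroup Y] [InnerProductSpace ℝ Y]

/-- A cone: closed under nonnegative scalar multiplication. -/
def IsCone (C : Set X) : Prop := ∀ x ∈ C, ∀ t : ℝ, 0 ≤ t → t • x ∈ C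

/-- A regular cone: a closed, convex, pointed cone with nonempty interior. -/
def IsRegularCone (C : Set X) : Prop :=
  IsCone C ∧ IsClosed C ∧ Convex ℝ C ∧ C ∩ (-C) = {0} ∧ (interior C).Nonempty

/-- The polar cone of `C`. -/
def polarCone (C : Set X) : Set X := {y | ∀ x ∈ C, ⟪x, y⟫ ≤ 0}

/-- The normal cone of a convex set `D` at a point `xbar`. -/
def normalCone (D : Set X) (xbar : X) : Set X := {y | ∀ x ∈ D, ⟪y, x - xbar⟫ ≤ 0}

/-- `F` is a face of the convex set `C`. -/
def IsFaceOf (C F : Set X) : Prop :=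
  F ⊆ C ∧ Convex ℝ F ∧ ∀ x ∈ C, ∀ y ∈ C, ∀ t : ℝ, 0 < t → t < 1 →
    (1 - t) • x + t • y ∈ F → x ∈ F ∧ y ∈ F

/-- The dimension of a set: the dimension of its affine hull. -/
def setDim (F : Set X) : ℕ := Module.finrank ℝ (affineSpan ℝ F).direction

/-- A strictly convex cone: a regular cone every proper nonzero face of which has
dimension one. -/
def IsStrictlyConvexCone (C : Set X) : Prop :=
  IsRegularCone C ∧ ∀ F : Set X, IsFaceOf C F → F ≠ C → F ≠ {0} → setDim F = 1

/-- The ray generated by `x`. -/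
def Ray (x : X) : Set X := {y | ∃ t : ℝ, 0 ≤ t ∧ y = t • x}

/-- `S` is a ray: generated by a nonzero vector. -/
def IsRay (S : Set X) : Prop := ∃ x : X, x ≠ 0 ∧ S = Ray x

/-- An extreme ray of `C`: a ray contained in `C` that is a face of `C`. -/
def IsExtremeRay (C S : Set X) : Prop := IsRay S ∧ S ⊆ C ∧ IsFaceOf C S

/-- A smooth cone: a regular cone such that every boundary point lies on an extreme ray
and the normal cone at every nonzero point of any extreme ray has dimension one. -/
def IsSmoothCone (C : Set X) : Prop :=
  IsRegularCone C ∧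
  (∀ x ∈ frontier C, ∃ S : Set X, IsExtremeRay C S ∧ x ∈ S) ∧
  (∀ S : Set X, IsExtremeRay C S → ∀ x ∈ S, x ≠ 0 → setDim (normalCone C x) = 1)


theorem subspace_meets_interior_and_equality [FiniteDimensional ℝ X] (C : Set X)
    (hC : IsRegularCone C) (L₁ L₂ : Submodule ℝ X)
    (hL₁ : ((L₁ : Set X) ∩ interior C).Nonempty) :
    (∀ u : X, (((fun v => u + v) '' (L₁ : Set X)) ∩ interior C).Nonempty) ∧
    ((L₁ : Set X) ∩ C = (L₂ : Set X) ∩ C → L₁ = L₂) := by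
  obtain ⟨x₀, hx₀L, hx₀int⟩ := hL₁
  obtain ⟨hcone, hclosed, hconv, hpt, hne⟩ := hC
  obtain ⟨ε, hε, hball⟩ := Metric.isOpen_iff.mp isOpen_interior x₀ hx₀int
  -- key: for any subspace L containing x₀ with L ∩ C ⊆ M (M a subspace containing x₀),
  -- we get L ≤ M
  have key : ∀ L M : Submodule ℝ X, x₀ ∈ L → x₀ ∈ M →
      ((L : Set X) ∩ C ⊆ (M : Set X)) → L ≤ M := by
    intro L M hxL hxM hsub y hy
    have hcont : Continuous (fun s : ℝ => x₀ + s • y) := by continuity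
    have hopen : IsOpen ((fun s : ℝ => x₀ + s • y) ⁻¹' interior C) :=
      isOpen_interior.preimage hcont
    have h0 : (0 : ℝ) ∈ (fun s : ℝ => x₀ + s • y) ⁻¹' interior C := by
      simp [hx₀int]
    obtain ⟨δ, hδ, hδsub⟩ := Metric.isOpen_iff.mp hopen 0 h0
    have hs : (δ / 2 : ℝ) ∈ Metric.ball (0 : ℝ) δ := by
      rw [Metric.mem_ball, dist_zero_right, Real.norm_eq_abs, abs_of_pos (half_pos hδ)]
      linarith
    have hmem : x₀ + (δ / 2) • y ∈ interior C := hδsub hs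
    have hmemL : x₀ + (δ / 2) • y ∈ (L : Set X) ∩ C :=
      ⟨L.add_mem hxL (L.smul_mem _ hy), interior_subset hmem⟩
    have hmemM : x₀ + (δ / 2) • y ∈ M := hsub hmemL
    have : (δ / 2) • y ∈ M := by
      have := M.sub_mem hmemM hxM
      simpa using this
    have hne2 : (δ / 2 : ℝ) ≠ 0 := by positivity
    have := M.smul_mem (δ / 2)⁻¹ this
    rwa [smul_smul, inv_mul_cancel₀ hne2, one_smul] at this
  constructor
  · intro u
    -- choose t large so that ‖u‖ < t * ε
    set t : ℝ := ‖u‖ / ε + 1 with ht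
    have htpos : 0 < t := by positivity
    have htε : ‖u‖ < t * ε := by
      have h2 : t * ε = ‖u‖ + ε := by
        rw [ht]; field_simp
      linarith
    have hballC : Metric.ball (t • x₀) (t * ε) ⊆ C := by
      intro z hz
      have hz' : t⁻¹ • z ∈ Metric.ball x₀ ε := by
        rw [Metric.mem_ball] at hz ⊢
        have : dist (t⁻¹ • z) x₀ = t⁻¹ * dist z (t • x₀) := by
          rw [dist_eq_norm, dist_eq_norm, ← norm_smul_of_nonneg (by positivity : (0:ℝ) ≤ t⁻¹)]
          congr 1
          rw [smul_sub, smul_smul, inv_mul_cancel₀ (ne_of_gt htpos), one_smul]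
        rw [this]
        calc t⁻¹ * dist z (t • x₀) < t⁻¹ * (t * ε) := by
              apply mul_lt_mul_of_pos_left hz (by positivity)
          _ = ε := by field_simp
      have hzC : t⁻¹ • z ∈ C := interior_subset (hball hz')
      have := hcone _ hzC t (le_of_lt htpos)
      rwa [smul_smul, mul_inv_cancel₀ (ne_of_gt htpos), one_smul] at this
    have hmem : u + t • x₀ ∈ interior C := by
      apply interior_maximal hballC Metric.isOpen_ball
      rw [Metric.mem_ball, dist_eq_norm]
      simpa using htε
    exact ⟨u + t • x₀, ⟨t • x₀, L₁.smul_mem t hx₀L, rfl⟩, hmem⟩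
  · intro heq
    have hx₀C : x₀ ∈ C := interior_subset hx₀int
    have hx₀L₂ : x₀ ∈ L₂ := by
      have : x₀ ∈ (L₂ : Set X) ∩ C := heq ▸ ⟨hx₀L, hx₀C⟩
      exact this.1
    exact le_antisymm
      (key L₁ L₂ hx₀L hx₀L₂ (fun y hy => ((heq ▸ hy : y ∈ (L₂ : Set X) ∩ C)).1))
      (key L₂ L₁ hx₀L₂ hx₀L (fun y hy => ((heq ▸ hy : y ∈ (L₁ : Set X) ∩ C)).1))
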